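/- Let D be a digraph of order n ≥ 6 with minimum out-degree and minimum in-degree both at least two, satisfying condition (*). Let C := x_1x_2…x_{n-1}x_1 be a cycle of length n−1 in D (subscripts modulo n−1), and let y be the vertex not on C. If D contains no Hamiltonian bypass, then there exist two vertices x_k and x_l on C with {x_k,x_{k+1}} ∩ {x_l,x_{l+1}} = ∅ such that x_ky, yx_{k+1}, x_ly and yx_{l+1} are all arcs of D. -/

import Mathlib

open Finset

variable {V : Type*}

/-- Out-degree of a vertex. -/
def outDeg [Fintype V] (A : V → V → Prop) [DecidableRel A] (v : V) : ℕ :=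
  (Finset.univ.filter (fun u => A v u)).card

/-- In-degree of a vertex. -/
def inDeg [Fintype V] (A : V → V → Prop) [DecidableRel A] (v : V) : ℕ :=
  (Finset.univ.filter (fun u => A u v)).card

/-- Degree of a vertex: out-degree plus in-degree. -/
def deg [Fintype V] (A : V → V → Prop) [DecidableRel A] (v : V) : ℕ :=
  outDeg A v + inDeg A v

/-- Two vertices are adjacent if there is an arc between them in some direction. -/
def Adj (A : V → V → Prop) (u v : V) : Prop := A u v ∨ A v u

/-- Condition (*): for every pair of non-adjacent vertices with a common in-neighbour,
`min {d(x), d(y)} ≥ n - 1` and `d(x) + d(y) ≥ 2n - 1`. -/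
def CondStar [Fintype V] (A : V → V → Prop) [DecidableRel A] : Prop :=
  ∀ x y : V, x ≠ y → ¬ Adj A x y → (∃ z : V, A z x ∧ A z y) →
    min (deg A x) (deg A y) ≥ Fintype.card V - 1 ∧
    deg A x + deg A y ≥ 2 * Fintype.card V - 1

/-- A Hamiltonian bypass: an ordering `x₁, …, xₙ` of all vertices such that
`x₁x₂, …, x_{n-1}xₙ` and `x₁xₙ` are all arcs. -/
def HamBypass (A : V → V → Prop) : Prop :=
  ∃ l : List V, l.Nodup ∧ (∀ v : V, v ∈ l) ∧ l.Chain' A ∧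
    ∃ a b : V, l.head? = some a ∧ l.getLast? = some b ∧ A a b

lemma exists_bypass (A : V → V → Prop) (k : ℕ) (hk : 1 ≤ k) (f : ℕ → V)
    (hinj : ∀ s, s < k → ∀ t, t < k → f s = f t → s = t)
    (hsurj : ∀ v : V, ∃ t, t < k ∧ f t = v)
    (hchain : ∀ t, t + 1 < k → A (f t) (f (t + 1)))
    (hlast : A (f 0) (f (k - 1))) : HamBypass A := by
  obtain ⟨k', rfl⟩ : ∃ k', k = k' + 1 := ⟨k - 1, by omega⟩
  refine ⟨(List.range (k' + 1)).map f, ?_, ?_, ?_, f 0, f k', ?_, ?_, ?_⟩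
  · refine List.Nodup.map_on ?_ List.nodup_range
    intro s hs t ht h
    exact hinj s (List.mem_range.mp hs) t (List.mem_range.mp ht) h
  · intro v
    obtain ⟨t, ht, rfl⟩ := hsurj v
    exact List.mem_map.mpr ⟨t, List.mem_range.mpr ht, rfl⟩
  · show List.IsChain _ _
    rw [List.isChain_map, List.isChain_range_succ]
    exact fun t ht => hchain t (by omega)
  · simp [List.range_succ_eq_map]
  · rw [List.range_succ, List.map_append]
    simp
  · simpa using hlast

theorem stmt16 [Fintype V] [DecidableEq V] (A : V → V → Prop) [DecidableRel A]
    (hloop : Irreflexive A)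
    (n : ℕ) (hcard : Fintype.card V = n) (hn : 6 ≤ n)
    (hout : ∀ v : V, 2 ≤ outDeg A v) (hin : ∀ v : V, 2 ≤ inDeg A v)
    (hstar : CondStar A)
    (x : ZMod (n - 1) → V) (hinj : Function.Injective x)
    (hcyc : ∀ i : ZMod (n - 1), A (x i) (x (i + 1)))
    (y : V) (hy : ∀ i : ZMod (n - 1), y ≠ x i)
    (hnb : ¬ HamBypass A) :
    ∃ k l : ZMod (n - 1),
      ({x k, x (k + 1)} : Set V) ∩ ({x l, x (l + 1)} : Set V) = ∅ ∧
      A (x k) y ∧ A y (x (k + 1)) ∧ A (x l) y ∧ A y (x (l + 1)) := by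
  haveI : NeZero (n - 1) := ⟨by omega⟩
  have hm5 : 5 ≤ n - 1 := by omega
  have castinj : ∀ s t : ℕ, s < n - 1 → t < n - 1 →
      ((s : ZMod (n - 1)) = (t : ZMod (n - 1))) → s = t := by
    intro s t hs ht h
    have h2 := congrArg ZMod.val h
    rwa [ZMod.val_cast_of_lt hs, ZMod.val_cast_of_lt ht] at h2
  have valback : ∀ q : ZMod (n - 1), ((q.val : ℕ) : ZMod (n - 1)) = q := fun q => by
    rw [ZMod.natCast_val, ZMod.cast_id]
  have hcast0 : ((n - 1 : ℕ) : ZMod (n - 1)) = 0 := ZMod.natCast_self _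
  have hcastm1 : ((n - 2 : ℕ) : ZMod (n - 1)) = -1 := by
    have e2 : ((n - 2 + 1 : ℕ) : ZMod (n - 1)) = 0 := by
      rw [show n - 2 + 1 = n - 1 by omega]; exact hcast0
    push_cast at e2
    exact eq_neg_of_add_eq_zero_left e2
  have hone : (1 : ZMod (n - 1)) ≠ 0 := by
    intro h
    have h' : ((1 : ℕ) : ZMod (n - 1)) = ((0 : ℕ) : ZMod (n - 1)) := by push_cast; rw [h]
    have := castinj 1 0 (by omega) (by omega) h'
    omega
  have htwo : (2 : ZMod (n - 1)) ≠ 0 := by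
    intro h
    have h' : ((2 : ℕ) : ZMod (n - 1)) = ((0 : ℕ) : ZMod (n - 1)) := by push_cast; rw [h]
    have := castinj 2 0 (by omega) (by omega) h'
    omega
  -- every vertex is y or on the cycle
  have hcover : ∀ v : V, v = y ∨ ∃ q, x q = v := by
    have himg : (univ.image x).card = n - 1 := by
      rw [Finset.card_image_of_injective _ hinj, Finset.card_univ, ZMod.card]
    have hyni : y ∉ univ.image x := by
      simp only [Finset.mem_image, Finset.mem_univ, true_and]
      rintro ⟨q, hq⟩
      exact hy q hq.symm
    have huniv : insert y (univ.image x) = univ := by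
      apply Finset.eq_univ_of_card
      rw [Finset.card_insert_of_notMem hyni, himg, hcard]
      omega
    intro v
    have hv : v ∈ insert y (univ.image x) := by rw [huniv]; exact Finset.mem_univ v
    rcases Finset.mem_insert.mp hv with h | h
    · exact Or.inl h
    · right
      obtain ⟨q, _, hq⟩ := Finset.mem_image.mp h
      exact ⟨q, hq⟩
  have hinCount : ∀ z : V, ¬ A y z → inDeg A z = (univ.filter fun p => A (x p) z).card := by
    intro z hyz
    unfold inDeg
    refine (Finset.card_bij (fun p _ => x p) ?_ ?_ ?_).symm
    · intro p hp
      simp only [Finset.mem_filter, Finset.mem_univ, true_and] at hp ⊢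
      exact hp
    · intro p _ q _ h
      exact hinj h
    · intro u hu
      simp only [Finset.mem_filter, Finset.mem_univ, true_and] at hu
      rcases hcover u with rfl | ⟨q, rfl⟩
      · exact absurd hu hyz
      · exact ⟨q, by simp [hu], rfl⟩
  have houtCount : ∀ z : V, ¬ A z y → outDeg A z = (univ.filter fun p => A z (x p)).card := by
    intro z hzy
    unfold outDeg
    refine (Finset.card_bij (fun p _ => x p) ?_ ?_ ?_).symm
    · intro p hp
      simp only [Finset.mem_filter, Finset.mem_univ, true_and] at hp ⊢
      exact hp
    · intro p _ q _ h
      exact hinj h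
    · intro u hu
      simp only [Finset.mem_filter, Finset.mem_univ, true_and] at hu
      rcases hcover u with rfl | ⟨q, rfl⟩
      · exact absurd hu hzy
      · exact ⟨q, by simp [hu], rfl⟩
  -- no two consecutive in-neighbours of y
  have hIcons : ∀ i : ZMod (n - 1), A (x i) y → A (x (i + 1)) y → False := by
    intro i h1 h2
    apply hnb
    refine exists_bypass A n (by omega)
      (fun t => if t = n - 1 then y else x (i + 1 + (t : ZMod (n - 1)))) ?_ ?_ ?_ ?_
    · intro s hs t ht h
      by_cases h1s : s = n - 1 <;> by_cases h1t : t = n - 1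
      · omega
      · rw [if_pos h1s, if_neg h1t] at h; exact absurd h (hy _)
      · rw [if_neg h1s, if_pos h1t] at h; exact absurd h.symm (hy _)
      · rw [if_neg h1s, if_neg h1t] at h
        have h3 := add_left_cancel (hinj h)
        exact castinj s t (by omega) (by omega) h3
    · intro v
      rcases hcover v with rfl | ⟨q, rfl⟩
      · exact ⟨n - 1, by omega, by simp⟩
      · have hlt := ZMod.val_lt (q - (i + 1))
        refine ⟨(q - (i + 1)).val, by omega, ?_⟩
        rw [if_neg (by omega), valback]
        exact congrArg x (by ring)
    · intro t ht
      rw [if_neg (show t ≠ n - 1 by omega)]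
      by_cases h : t + 1 = n - 1
      · rw [if_pos h]
        rw [show t = n - 2 by omega, hcastm1,
          show i + 1 + (-1 : ZMod (n - 1)) = i by ring]
        exact h1
      · rw [if_neg h,
          show (((t + 1 : ℕ)) : ZMod (n - 1)) = ((t : ℕ) : ZMod (n - 1)) + 1 by push_cast; ring,
          ← add_assoc]
        exact hcyc _
    · rw [if_neg (show (0 : ℕ) ≠ n - 1 by omega), if_pos rfl]
      simpa using h2
  -- no two consecutive out-neighbours of y
  have hOcons : ∀ b : ZMod (n - 1), A y (x b) → A y (x (b + 1)) → False := by
    intro b h1 h2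
    apply hnb
    refine exists_bypass A n (by omega)
      (fun t => if t = 0 then y else x (b + 1 + ((t - 1 : ℕ) : ZMod (n - 1)))) ?_ ?_ ?_ ?_
    · intro s hs t ht h
      by_cases h1s : s = 0 <;> by_cases h1t : t = 0
      · omega
      · rw [if_pos h1s, if_neg h1t] at h; exact absurd h (hy _)
      · rw [if_neg h1s, if_pos h1t] at h; exact absurd h.symm (hy _)
      · rw [if_neg h1s, if_neg h1t] at h
        have h3 := add_left_cancel (hinj h)
        have := castinj (s - 1) (t - 1) (by omega) (by omega) h3
        omega
    · intro v
      rcases hcover v with rfl | ⟨q, rfl⟩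
      · exact ⟨0, by omega, by simp⟩
      · have hlt := ZMod.val_lt (q - (b + 1))
        refine ⟨(q - (b + 1)).val + 1, by omega, ?_⟩
        rw [if_neg (by omega)]
        simp only [Nat.add_sub_cancel]
        rw [valback]
        exact congrArg x (by ring)
    · intro t ht
      by_cases h0 : t = 0
      · subst h0
        rw [if_pos rfl, if_neg (by omega : (0:ℕ) + 1 ≠ 0)]
        simpa using h2
      · rw [if_neg h0, if_neg (by omega : t + 1 ≠ 0),
          show ((t + 1 - 1 : ℕ) : ZMod (n - 1)) = ((t - 1 : ℕ) : ZMod (n - 1)) + 1 by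
            rw [show t + 1 - 1 = (t - 1) + 1 by omega]; push_cast; ring,
          ← add_assoc]
        exact hcyc _
    · rw [if_pos rfl, if_neg (by omega : n - 1 ≠ 0),
        show (n - 1 - 1 : ℕ) = n - 2 by omega, hcastm1,
        show b + 1 + (-1 : ZMod (n - 1)) = b by ring]
      exact h1
  by_contra hcon
  -- any two insertion positions coincide
  have hK1 : ∀ k : ZMod (n - 1), A (x k) y → A y (x (k + 1)) →
      ∀ l : ZMod (n - 1), A (x l) y → A y (x (l + 1)) → k = l := by
    intro k hk1 hk2 l hl1 hl2
    by_contra hne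
    refine hcon ⟨k, l, ?_, hk1, hk2, hl1, hl2⟩
    have h2 : k ≠ l + 1 := fun h => hIcons l hl1 (h ▸ hk1)
    have h3 : k + 1 ≠ l := fun h => hIcons k hk1 (h ▸ hl1)
    have h4 : k + 1 ≠ l + 1 := fun h => hne (add_right_cancel h)
    rw [Set.eq_empty_iff_forall_notMem]
    rintro v ⟨hv1, hv2⟩
    simp only [Set.mem_insert_iff, Set.mem_singleton_iff] at hv1 hv2
    rcases hv1 with rfl | rfl <;> rcases hv2 with h | h
    · exact hne (hinj h)
    · exact h2 (hinj h)
    · exact h3 (hinj h)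
    · exact h4 (hinj h)
  classical
  set Iset : Finset (ZMod (n - 1)) := univ.filter (fun i => A (x i) y) with hIdef
  set Oset : Finset (ZMod (n - 1)) := univ.filter (fun i => A y (x i)) with hOdef
  have hmemI : ∀ i, i ∈ Iset ↔ A (x i) y := by intro i; simp [hIdef]
  have hmemO : ∀ i, i ∈ Oset ↔ A y (x i) := by intro i; simp [hOdef]
  have hIcard2 : 2 ≤ Iset.card := by
    have h := hin y
    rwa [hinCount y (hloop y)] at h
  have hOcard2 : 2 ≤ Oset.card := by
    have h := hout y
    rwa [houtCount y (hloop y)] at h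
  have hdegy : deg A y = Iset.card + Oset.card := by
    unfold deg
    rw [houtCount y (hloop y), hinCount y (hloop y)]
    exact Nat.add_comm _ _
  set K : Finset (ZMod (n - 1)) := Iset.filter (fun i => A y (x (i + 1))) with hKdef
  have hmemK : ∀ i, i ∈ K ↔ (A (x i) y ∧ A y (x (i + 1))) := by
    intro i
    rw [hKdef, Finset.mem_filter, hmemI]
  have hKcard : K.card ≤ 1 := by
    apply Finset.card_le_one.mpr
    intro a ha b hb
    obtain ⟨ha1, ha2⟩ := (hmemK a).mp ha
    obtain ⟨hb1, hb2⟩ := (hmemK b).mp hb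
    exact hK1 a ha1 ha2 b hb1 hb2
  have hKI : K ⊆ Iset := by rw [hKdef]; exact Finset.filter_subset _ _
  obtain ⟨i, hiIK⟩ : ∃ i, i ∈ Iset \ K := by
    apply Finset.card_pos.mp
    rw [Finset.card_sdiff_of_subset hKI]
    omega
  obtain ⟨hiI, hiK⟩ := Finset.mem_sdiff.mp hiIK
  have hi1 : A (x i) y := (hmemI i).mp hiI
  have hino : ¬ A y (x (i + 1)) := fun h => hiK ((hmemK i).mpr ⟨hi1, h⟩)
  have hini : ¬ A (x (i + 1)) y := fun h => hIcons i hi1 h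
  obtain ⟨hmin, hsum⟩ := hstar y (x (i + 1)) (hy (i + 1))
    (fun h => h.elim hino hini) ⟨x i, hi1, hcyc i⟩
  rw [hcard] at hmin hsum
  have hdy : n - 1 ≤ deg A y := le_trans hmin (min_le_left _ _)
  -- shifted sets are disjoint
  have hIdisj : Disjoint Iset (Iset.image (· + 1)) := by
    rw [Finset.disjoint_left]
    intro a haI haI'
    obtain ⟨b, hb, hba⟩ := Finset.mem_image.mp haI'
    have : A (x (b + 1)) y := by rw [hba]; exact (hmemI a).mp haI
    exact hIcons b ((hmemI b).mp hb) this
  have hOdisj : Disjoint Oset (Oset.image (· + 1)) := by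
    rw [Finset.disjoint_left]
    intro a haO haO'
    obtain ⟨b, hb, hba⟩ := Finset.mem_image.mp haO'
    have : A y (x (b + 1)) := by rw [hba]; exact (hmemO a).mp haO
    exact hOcons b ((hmemO b).mp hb) this
  have hIcardle : 2 * Iset.card ≤ n - 1 := by
    have h1 : (Iset ∪ Iset.image (· + 1)).card = 2 * Iset.card := by
      rw [Finset.card_union_of_disjoint hIdisj,
        Finset.card_image_of_injective _ (add_left_injective 1)]
      ring
    have h2 : (Iset ∪ Iset.image (· + 1)).card ≤ n - 1 := by
      have := Finset.card_le_univ (Iset ∪ Iset.image (· + 1))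
      rwa [ZMod.card] at this
    omega
  have hOcardle : 2 * Oset.card ≤ n - 1 := by
    have h1 : (Oset ∪ Oset.image (· + 1)).card = 2 * Oset.card := by
      rw [Finset.card_union_of_disjoint hOdisj,
        Finset.card_image_of_injective _ (add_left_injective 1)]
      ring
    have h2 : (Oset ∪ Oset.image (· + 1)).card ≤ n - 1 := by
      have := Finset.card_le_univ (Oset ∪ Oset.image (· + 1))
      rwa [ZMod.card] at this
    omega
  have hIO : n - 1 ≤ Iset.card + Oset.card := hdegy ▸ hdy
  have hIcardeq : 2 * Iset.card = n - 1 := by omega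
  have hIuniv : Iset ∪ Iset.image (· + 1) = univ := by
    apply Finset.eq_univ_of_card
    rw [Finset.card_union_of_disjoint hIdisj,
      Finset.card_image_of_injective _ (add_left_injective 1), ZMod.card]
    omega
  have hI2 : ∀ a : ZMod (n - 1), A (x a) y → A (x (a + 2)) y := by
    intro a ha
    have hmem : a + 2 ∈ Iset ∪ Iset.image (· + 1) := by
      rw [hIuniv]; exact Finset.mem_univ _
    rcases Finset.mem_union.mp hmem with h | h
    · exact (hmemI _).mp h
    · exfalso
      obtain ⟨b, hb, hba⟩ := Finset.mem_image.mp h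
      have hb' : b = a + 1 := by
        have hh : b + 1 = a + 1 + 1 := by rw [hba]; ring
        exact add_right_cancel hh
      refine hIcons a ha ?_
      rw [← hb']
      exact (hmemI b).mp hb
  have hO2 : ∀ a : ZMod (n - 1), A y (x a) → A y (x (a + 2)) := by
    intro a ha
    have hOuniv : Oset ∪ Oset.image (· + 1) = univ := by
      apply Finset.eq_univ_of_card
      rw [Finset.card_union_of_disjoint hOdisj,
        Finset.card_image_of_injective _ (add_left_injective 1), ZMod.card]
      omega
    have hmem : a + 2 ∈ Oset ∪ Oset.image (· + 1) := by
      rw [hOuniv]; exact Finset.mem_univ _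
    rcases Finset.mem_union.mp hmem with h | h
    · exact (hmemO _).mp h
    · exfalso
      obtain ⟨b, hb, hba⟩ := Finset.mem_image.mp h
      have hb' : b = a + 1 := by
        have hh : b + 1 = a + 1 + 1 := by rw [hba]; ring
        exact add_right_cancel hh
      refine hOcons a ha ?_
      rw [← hb']
      exact (hmemO b).mp hb
  rcases K.eq_empty_or_nonempty with hKe | ⟨k, hk⟩
  · -- K empty : find an insertion of x (i+1) into the path and build a bypass
    have hdegyval : deg A y = n - 1 := by omega
    have hdz : n ≤ deg A (x (i + 1)) := by omega
    have hIz : inDeg A (x (i + 1)) = (univ.filter fun p => A (x p) (x (i + 1))).card :=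
      hinCount _ hino
    have hOzraw : outDeg A (x (i + 1)) = (univ.filter fun p => A (x (i + 1)) (x p)).card :=
      houtCount _ hini
    have hOzshift : (univ.filter fun p => A (x (i + 1)) (x (p + 1))).card
        = (univ.filter fun p => A (x (i + 1)) (x p)).card := by
      refine Finset.card_bij' (fun p _ => p + 1) (fun q _ => q - 1) ?_ ?_ ?_ ?_
      · intro p hp
        simp only [Finset.mem_filter, Finset.mem_univ, true_and] at hp ⊢
        exact hp
      · intro q hq
        simp only [Finset.mem_filter, Finset.mem_univ, true_and] at hq ⊢
        rwa [sub_add_cancel]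
      · intro p _; ring
      · intro q _; ring
    have hine : i ≠ i + 1 := fun h => hone (left_eq_add.mp h)
    set Iz := univ.filter (fun p => A (x p) (x (i + 1))) with hIzdef
    set Oz := univ.filter (fun p => A (x (i + 1)) (x (p + 1))) with hOzdef
    set T := (univ : Finset (ZMod (n - 1))) \ {i, i + 1} with hTdef
    have hTcard : T.card = n - 1 - 2 := by
      rw [hTdef, Finset.card_sdiff_of_subset (Finset.subset_univ _), Finset.card_univ, ZMod.card,
        Finset.card_pair hine]
    have hIzT : Iz \ {i} ⊆ T := by
      intro p hp
      rw [Finset.mem_sdiff, Finset.mem_singleton] at hp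
      obtain ⟨hpI, hpi⟩ := hp
      rw [hIzdef, Finset.mem_filter] at hpI
      rw [hTdef, Finset.mem_sdiff]
      refine ⟨Finset.mem_univ _, ?_⟩
      simp only [Finset.mem_insert, Finset.mem_singleton]
      push_neg
      refine ⟨hpi, fun h => ?_⟩
      rw [h] at hpI
      exact hloop _ hpI.2
    have hOzT : Oz \ {i + 1} ⊆ T := by
      intro p hp
      rw [Finset.mem_sdiff, Finset.mem_singleton] at hp
      obtain ⟨hpO, hpi1⟩ := hp
      rw [hOzdef, Finset.mem_filter] at hpO
      rw [hTdef, Finset.mem_sdiff]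
      refine ⟨Finset.mem_univ _, ?_⟩
      simp only [Finset.mem_insert, Finset.mem_singleton]
      push_neg
      refine ⟨fun h => ?_, hpi1⟩
      rw [h] at hpO
      exact hloop _ hpO.2
    have hIzc : Iz.card ≤ (Iz \ {i}).card + 1 := by
      have hsub : Iz ⊆ (Iz \ {i}) ∪ {i} := by
        intro a ha
        by_cases h : a = i
        · subst h; exact Finset.mem_union_right _ (Finset.mem_singleton_self _)
        · exact Finset.mem_union_left _ (Finset.mem_sdiff.mpr ⟨ha, by simpa using h⟩)
      calc Iz.card ≤ ((Iz \ {i}) ∪ {i}).card := Finset.card_le_card hsub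
        _ ≤ (Iz \ {i}).card + ({i} : Finset (ZMod (n - 1))).card := Finset.card_union_le _ _
        _ = (Iz \ {i}).card + 1 := by rw [Finset.card_singleton]
    have hOzc : Oz.card ≤ (Oz \ {i + 1}).card + 1 := by
      have hsub : Oz ⊆ (Oz \ {i + 1}) ∪ {i + 1} := by
        intro a ha
        by_cases h : a = i + 1
        · subst h; exact Finset.mem_union_right _ (Finset.mem_singleton_self _)
        · exact Finset.mem_union_left _ (Finset.mem_sdiff.mpr ⟨ha, by simpa using h⟩)
      calc Oz.card ≤ ((Oz \ {i + 1}) ∪ {i + 1}).card := Finset.card_le_card hsub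
        _ ≤ (Oz \ {i + 1}).card + ({i + 1} : Finset (ZMod (n - 1))).card :=
            Finset.card_union_le _ _
        _ = (Oz \ {i + 1}).card + 1 := by rw [Finset.card_singleton]
    have hdz' : n ≤ Iz.card + Oz.card := by
      unfold deg at hdz
      omega
    obtain ⟨p, hp⟩ : ∃ p, p ∈ (Iz \ {i}) ∩ (Oz \ {i + 1}) := by
      apply Finset.card_pos.mp
      have h1 := Finset.card_inter_add_card_union (Iz \ {i}) (Oz \ {i + 1})
      have h2 : ((Iz \ {i}) ∪ (Oz \ {i + 1})).card ≤ T.card :=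
        Finset.card_le_card (Finset.union_subset hIzT hOzT)
      omega
    rw [Finset.mem_inter, Finset.mem_sdiff, Finset.mem_sdiff,
      Finset.mem_singleton, Finset.mem_singleton] at hp
    obtain ⟨⟨hpIz, hpi⟩, hpOz, hpi1⟩ := hp
    rw [hIzdef, Finset.mem_filter] at hpIz
    rw [hOzdef, Finset.mem_filter] at hpOz
    have hp1 : A (x p) (x (i + 1)) := hpIz.2
    have hp2 : A (x (i + 1)) (x (p + 1)) := hpOz.2
    set c := (p - (i + 1)).val with hcdef
    have hclt : c < n - 1 := ZMod.val_lt _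
    have hpc : p = i + 1 + (c : ZMod (n - 1)) := by
      rw [hcdef, valback]; ring
    have hc1 : 1 ≤ c := by
      rcases Nat.eq_zero_or_pos c with h | h
      · exfalso
        apply hpi1
        rw [hpc, h]
        simp
      · exact h
    have hc2 : c ≤ n - 3 := by
      by_contra h
      apply hpi
      rw [hpc, show c = n - 2 by omega, hcastm1]
      ring
    apply hnb
    refine exists_bypass A n (by omega)
      (fun t => if t = n - 1 then y
        else x (i + 1 + ((if t < c then t + 1 else if t = c then 0 else t : ℕ) : ZMod (n - 1))))
      ?_ ?_ ?_ ?_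
    · intro a ha b hb h
      by_cases h1s : a = n - 1 <;> by_cases h1t : b = n - 1
      · omega
      · rw [if_pos h1s, if_neg h1t] at h; exact absurd h (hy _)
      · rw [if_neg h1s, if_pos h1t] at h; exact absurd h.symm (hy _)
      · rw [if_neg h1s, if_neg h1t] at h
        have h2 := add_left_cancel (hinj h)
        have hua : (if a < c then a + 1 else if a = c then 0 else a) < n - 1 := by
          split_ifs <;> omega
        have hub : (if b < c then b + 1 else if b = c then 0 else b) < n - 1 := by
          split_ifs <;> omega
        have h3 := castinj _ _ hua hub h2
        split_ifs at h3 <;> omega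
    · intro v
      rcases hcover v with rfl | ⟨q, rfl⟩
      · exact ⟨n - 1, by omega, by simp⟩
      · have hslt : (q - (i + 1)).val < n - 1 := ZMod.val_lt _
        have hsq : (((q - (i + 1)).val : ℕ) : ZMod (n - 1)) = q - (i + 1) := valback _
        by_cases hs0 : (q - (i + 1)).val = 0
        · refine ⟨c, by omega, ?_⟩
          rw [if_neg (by omega), if_neg (show ¬ c < c by omega), if_pos rfl]
          have hq : q = i + 1 := by
            have h0 : q - (i + 1) = 0 := by rw [← hsq, hs0]; simp
            exact sub_eq_zero.mp h0
          rw [hq]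
          simp
        · by_cases hsc : (q - (i + 1)).val ≤ c
          · refine ⟨(q - (i + 1)).val - 1, by omega, ?_⟩
            rw [if_neg (by omega), if_pos (show (q - (i + 1)).val - 1 < c by omega),
              show (q - (i + 1)).val - 1 + 1 = (q - (i + 1)).val by omega, hsq]
            exact congrArg x (by ring)
          · refine ⟨(q - (i + 1)).val, by omega, ?_⟩
            rw [if_neg (by omega), if_neg (show ¬ (q - (i + 1)).val < c by omega),
              if_neg (show (q - (i + 1)).val ≠ c by omega), hsq]
            exact congrArg x (by ring)
    · intro t ht
      rw [if_neg (show t ≠ n - 1 by omega)]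
      by_cases h1 : t + 1 = n - 1
      · rw [if_pos h1, if_neg (show ¬ t < c by omega), if_neg (show t ≠ c by omega)]
        rw [show t = n - 2 by omega, hcastm1,
          show i + 1 + (-1 : ZMod (n - 1)) = i by ring]
        exact hi1
      · rw [if_neg h1]
        by_cases h2 : t + 1 < c
        · rw [if_pos (show t < c by omega), if_pos h2,
            show ((t + 1 + 1 : ℕ) : ZMod (n - 1)) = ((t + 1 : ℕ) : ZMod (n - 1)) + 1 by
              push_cast; ring,
            ← add_assoc]
          exact hcyc _
        · by_cases h3 : t + 1 = c
          · rw [if_pos (show t < c by omega), if_neg (show ¬ t + 1 < c by omega), if_pos h3, h3]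
            rw [← hpc]
            simpa using hp1
          · by_cases h4 : t = c
            · rw [if_neg (show ¬ t < c by omega), if_pos h4,
                if_neg (show ¬ t + 1 < c by omega), if_neg (show t + 1 ≠ c by omega)]
              rw [show ((t + 1 : ℕ) : ZMod (n - 1)) = (c : ZMod (n - 1)) + 1 by
                  rw [show t + 1 = c + 1 by omega]; push_cast; ring]
              simp only [Nat.cast_zero, add_zero]
              rw [show i + 1 + ((c : ZMod (n - 1)) + 1) = (i + 1 + (c : ZMod (n - 1))) + 1 by ring,
                ← hpc]
              exact hp2
            · rw [if_neg (show ¬ t < c by omega), if_neg h4,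
                if_neg (show ¬ t + 1 < c by omega), if_neg (show t + 1 ≠ c by omega),
                show ((t + 1 : ℕ) : ZMod (n - 1)) = ((t : ℕ) : ZMod (n - 1)) + 1 by
                  push_cast; ring,
                ← add_assoc]
              exact hcyc _
    · rw [if_neg (show (0 : ℕ) ≠ n - 1 by omega), if_pos rfl,
        if_pos (show 0 < c by omega)]
      have := hI2 i hi1
      rw [show i + 2 = i + 1 + ((0 + 1 : ℕ) : ZMod (n - 1)) by push_cast; ring] at this
      exact this
  · -- K nonempty : two insertion positions, contradiction with uniqueness
    obtain ⟨hk1, hk2⟩ := (hmemK k).mp hk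
    have hk1' : A (x (k + 2)) y := hI2 k hk1
    have hk2' : A y (x (k + 2 + 1)) := by
      have := hO2 (k + 1) hk2
      rwa [show k + 1 + 2 = k + 2 + 1 by ring] at this
    have heq := hK1 k hk1 hk2 (k + 2) hk1' hk2'
    exact htwo (left_eq_add.mp heq)
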